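/- arXiv:1707.03556 — 3 statements merged into one kernel-verified Lean document; each statement's English description precedes it below -/
import Mathlib

section
/- A vertex u belongs to the k-core of a finite graph G if and only if the limiting Warning Propagation mark μ_u(G) equals 1. Moreover, an edge {v,w} of G joins two vertices of the k-core if and only if μ_{v→w}(G) = μ_{w→v}(G) = 1. -/
/-- Warning Propagation messages: `wpMsg G k t v w` is the message sent from `v` to `w`
at time `t`; initially all messages are `true` (i.e. 1), and
μ_{v→w}(t+1) = 1{∑_{u ∈ ∂v \ {w}} μ_{u→v}(t) ≥ k-1}. -/
def wpMsg {V : Type*} [Fintype V] [DecidableEq V] (G : SimpleGraph V) [DecidableRel G.Adj]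
    (k : ℕ) : ℕ → V → V → Bool
  | 0, _, _ => true
  | t+1, v, w =>
      decide (k - 1 ≤ (Finset.univ.filter fun u => G.Adj u v ∧ u ≠ w ∧ wpMsg G k t u v = true).card)

/-- `coreMember G k u`: u belongs to the k-core, i.e. to some (hence to the largest)
subgraph of minimum degree at least k. -/
def coreMember {V : Type*} [Fintype V] [DecidableEq V] (G : SimpleGraph V) [DecidableRel G.Adj]
    (k : ℕ) (u : V) : Prop :=
  ∃ S : Finset V, u ∈ S ∧ ∀ v ∈ S, k ≤ (S.filter fun w => G.Adj v w).card

/-- Claim A: core vertices always send `true` messages. -/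
lemma wp_core_msg {V : Type*} [Fintype V] [DecidableEq V] (G : SimpleGraph V)
    [DecidableRel G.Adj] (k : ℕ) :
    ∀ t v, coreMember G k v → ∀ w, wpMsg G k t v w = true := by
  intro t
  induction t with
  | zero => intro v _ w; rfl
  | succ t ih =>
    intro v hv w
    obtain ⟨S, hvS, hS⟩ := hv
    show decide _ = true
    rw [decide_eq_true_iff]
    have hsub : (S.filter fun u => G.Adj v u).erase w ⊆
        Finset.univ.filter fun u => G.Adj u v ∧ u ≠ w ∧ wpMsg G k t u v = true := by
      intro u hu
      rw [Finset.mem_erase] at hu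
      obtain ⟨hne, hu⟩ := hu
      rw [Finset.mem_filter] at hu
      simp only [Finset.mem_filter, Finset.mem_univ, true_and]
      exact ⟨hu.2.symm, hne, ih u ⟨S, hu.1, hS⟩ v⟩
    calc k - 1 ≤ (S.filter fun u => G.Adj v u).card - 1 := Nat.sub_le_sub_right (hS v hvS) 1
      _ ≤ ((S.filter fun u => G.Adj v u).erase w).card := Finset.pred_card_le_card_erase
      _ ≤ _ := Finset.card_le_card hsub

theorem stmt11 {V : Type*} [Fintype V] [DecidableEq V] (G : SimpleGraph V) [DecidableRel G.Adj]
    (k : ℕ) (hk : 3 ≤ k) (T : ℕ) (hT : ∀ t, T ≤ t → wpMsg G k t = wpMsg G k T) :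
    (∀ u : V, coreMember G k u ↔
      k ≤ (Finset.univ.filter fun w => G.Adj w u ∧ wpMsg G k T w u = true).card) ∧
    (∀ v w : V, G.Adj v w →
      ((coreMember G k v ∧ coreMember G k w) ↔
        (wpMsg G k T v w = true ∧ wpMsg G k T w v = true))) := by
  classical
  have hk1 : 1 ≤ k := le_trans (by norm_num) hk
  -- the fixed-point equation
  have hfix : ∀ v w : V, wpMsg G k T v w = true ↔
      k - 1 ≤ (Finset.univ.filter fun u => G.Adj u v ∧ u ≠ w ∧ wpMsg G k T u v = true).card := by
    intro v w
    have h := congrFun (congrFun (hT (T+1) (Nat.le_succ T)) v) w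
    rw [← h]
    simp [wpMsg]
  -- if a vertex has ≥ k true incoming messages, all its outgoing messages are true
  have hout : ∀ v : V,
      k ≤ (Finset.univ.filter fun w => G.Adj w v ∧ wpMsg G k T w v = true).card →
      ∀ w, wpMsg G k T v w = true := by
    intro v hv w
    rw [hfix]
    have hsub : (Finset.univ.filter fun u => G.Adj u v ∧ wpMsg G k T u v = true).erase w ⊆
        Finset.univ.filter fun u => G.Adj u v ∧ u ≠ w ∧ wpMsg G k T u v = true := by
      intro u hu
      rw [Finset.mem_erase] at hu
      obtain ⟨hne, hu⟩ := hu
      simp only [Finset.mem_filter, Finset.mem_univ, true_and] at hu ⊢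
      exact ⟨hu.1, hne, hu.2⟩
    calc k - 1 ≤ _ - 1 := Nat.sub_le_sub_right hv 1
      _ ≤ _ := Finset.pred_card_le_card_erase
      _ ≤ _ := Finset.card_le_card hsub
  -- marked vertices are core members
  have hmark : ∀ u : V,
      k ≤ (Finset.univ.filter fun w => G.Adj w u ∧ wpMsg G k T w u = true).card →
      coreMember G k u := by
    intro u hu
    refine ⟨Finset.univ.filter fun v =>
      k ≤ (Finset.univ.filter fun w => G.Adj w v ∧ wpMsg G k T w v = true).card,
      by simpa using hu, ?_⟩
    intro v hv
    simp only [Finset.mem_filter, Finset.mem_univ, true_and] at hv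
    have hsub : (Finset.univ.filter fun w => G.Adj w v ∧ wpMsg G k T w v = true) ⊆
        (Finset.univ.filter fun v' =>
          k ≤ (Finset.univ.filter fun w => G.Adj w v' ∧ wpMsg G k T w v' = true).card).filter
          (fun w => G.Adj v w) := by
      intro w hw
      simp only [Finset.mem_filter, Finset.mem_univ, true_and] at hw ⊢
      obtain ⟨hadj, hmsg⟩ := hw
      refine ⟨?_, hadj.symm⟩
      -- show w has ≥ k true incoming messages
      have h1 : k - 1 ≤ (Finset.univ.filter fun u =>
          G.Adj u w ∧ u ≠ v ∧ wpMsg G k T u w = true).card := (hfix w v).mp hmsg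
      have hvw : wpMsg G k T v w = true := hout v hv w
      have hvnot : v ∉ Finset.univ.filter fun u =>
          G.Adj u w ∧ u ≠ v ∧ wpMsg G k T u w = true := by
        simp only [Finset.mem_filter, Finset.mem_univ, true_and, not_and]
        intro _ h; exact absurd rfl h
      have hins : insert v (Finset.univ.filter fun u =>
          G.Adj u w ∧ u ≠ v ∧ wpMsg G k T u w = true) ⊆
          Finset.univ.filter fun u => G.Adj u w ∧ wpMsg G k T u w = true := by
        intro x hx
        rcases Finset.mem_insert.mp hx with rfl | hx
        · simp only [Finset.mem_filter, Finset.mem_univ, true_and]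
          exact ⟨hadj.symm, hvw⟩
        · simp only [Finset.mem_filter, Finset.mem_univ, true_and] at hx ⊢
          exact ⟨hx.1, hx.2.2⟩
      calc k = (k - 1) + 1 := (Nat.sub_add_cancel hk1).symm
        _ ≤ _ + 1 := Nat.add_le_add_right h1 1
        _ = (insert v (Finset.univ.filter fun u =>
              G.Adj u w ∧ u ≠ v ∧ wpMsg G k T u w = true)).card :=
            (Finset.card_insert_of_notMem hvnot).symm
        _ ≤ _ := Finset.card_le_card hins
    calc k ≤ _ := hv
      _ ≤ _ := Finset.card_le_card hsub
  -- first statement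
  have first : ∀ u : V, coreMember G k u ↔
      k ≤ (Finset.univ.filter fun w => G.Adj w u ∧ wpMsg G k T w u = true).card := by
    intro u
    constructor
    · rintro ⟨S, huS, hS⟩
      have hsub : S.filter (fun w => G.Adj u w) ⊆
          Finset.univ.filter fun w => G.Adj w u ∧ wpMsg G k T w u = true := by
        intro w hw
        rw [Finset.mem_filter] at hw
        simp only [Finset.mem_filter, Finset.mem_univ, true_and]
        exact ⟨hw.2.symm, wp_core_msg G k T w ⟨S, hw.1, hS⟩ u⟩
      exact le_trans (hS u huS) (Finset.card_le_card hsub)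
    · exact hmark u
  refine ⟨first, ?_⟩
  intro v w hvw
  constructor
  · rintro ⟨hv, hw⟩
    exact ⟨wp_core_msg G k T v hv w, wp_core_msg G k T w hw v⟩
  · rintro ⟨h1, h2⟩
    constructor
    · -- v is core: msg w→v true plus k-1 others
      refine (first v).mpr ?_
      have hcard : k - 1 ≤ (Finset.univ.filter fun u =>
          G.Adj u v ∧ u ≠ w ∧ wpMsg G k T u v = true).card := (hfix v w).mp h1
      have hwnot : w ∉ Finset.univ.filter fun u =>
          G.Adj u v ∧ u ≠ w ∧ wpMsg G k T u v = true := by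
        simp only [Finset.mem_filter, Finset.mem_univ, true_and, not_and]
        intro _ h; exact absurd rfl h
      have hins : insert w (Finset.univ.filter fun u =>
          G.Adj u v ∧ u ≠ w ∧ wpMsg G k T u v = true) ⊆
          Finset.univ.filter fun u => G.Adj u v ∧ wpMsg G k T u v = true := by
        intro x hx
        rcases Finset.mem_insert.mp hx with rfl | hx
        · simp only [Finset.mem_filter, Finset.mem_univ, true_and]
          exact ⟨hvw.symm, h2⟩
        · simp only [Finset.mem_filter, Finset.mem_univ, true_and] at hx ⊢
          exact ⟨hx.1, hx.2.2⟩
      calc k = (k - 1) + 1 := (Nat.sub_add_cancel hk1).symm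
        _ ≤ _ + 1 := Nat.add_le_add_right hcard 1
        _ = (insert w (Finset.univ.filter fun u =>
              G.Adj u v ∧ u ≠ w ∧ wpMsg G k T u v = true)).card :=
            (Finset.card_insert_of_notMem hwnot).symm
        _ ≤ _ := Finset.card_le_card hins
    · refine (first w).mpr ?_
      have hcard : k - 1 ≤ (Finset.univ.filter fun u =>
          G.Adj u w ∧ u ≠ v ∧ wpMsg G k T u w = true).card := (hfix w v).mp h2
      have hvnot : v ∉ Finset.univ.filter fun u =>
          G.Adj u w ∧ u ≠ v ∧ wpMsg G k T u w = true := by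
        simp only [Finset.mem_filter, Finset.mem_univ, true_and, not_and]
        intro _ h; exact absurd rfl h
      have hins : insert v (Finset.univ.filter fun u =>
          G.Adj u w ∧ u ≠ v ∧ wpMsg G k T u w = true) ⊆
          Finset.univ.filter fun u => G.Adj u w ∧ wpMsg G k T u w = true := by
        intro x hx
        rcases Finset.mem_insert.mp hx with rfl | hx
        · simp only [Finset.mem_filter, Finset.mem_univ, true_and]
          exact ⟨hvw, h1⟩
        · simp only [Finset.mem_filter, Finset.mem_univ, true_and] at hx ⊢
          exact ⟨hx.1, hx.2.2⟩
      calc k = (k - 1) + 1 := (Nat.sub_add_cancel hk1).symm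
        _ ≤ _ + 1 := Nat.add_le_add_right hcard 1
        _ = (insert v (Finset.univ.filter fun u =>
              G.Adj u w ∧ u ≠ v ∧ wpMsg G k T u w = true)).card :=
            (Finset.card_insert_of_notMem hvnot).symm
        _ ≤ _ := Finset.card_le_card hins
end

section
/- Let G be a finite graph with limiting Warning Propagation messages μ_{v→w}(G). Define d_{G,ab}(v) as the number of neighbours w of v with μ_{w→v}(G)=a and μ_{v→w}(G)=b. Then: (1) v ∈ N_0(G) iff d_{G,10}(v) ≤ k-2 and d_{G,11}(v) = d_{G,01}(v) = 0; (2) v ∈ N_⋆(G) iff d_{G,10}(v) = k-1 and d_{G,11}(v) = d_{G,00}(v) = 0; (3) v ∈ N_1(G) iff d_{G,11}(v) ≥ k and d_{G,10}(v) = d_{G,00}(v) = 0. -/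
/-- with μ the limiting WP messages (stabilised at time T) and
d_{G,ab}(v) the number of neighbours w of v with μ_{w→v}=a, μ_{v→w}=b:
(1) v ∈ N_0 iff d_{10}(v) ≤ k-2 and d_{11}(v)=d_{01}(v)=0;
(2) v ∈ N_⋆ iff d_{10}(v) = k-1 and d_{11}(v)=d_{00}(v)=0;
(3) v ∈ N_1 iff d_{11}(v) ≥ k and d_{10}(v)=d_{00}(v)=0. -/
theorem stmt14 {V : Type*} [Fintype V] [DecidableEq V] (G : SimpleGraph V) [DecidableRel G.Adj]
    (k : ℕ) (hk : 3 ≤ k) (T : ℕ) (hT : ∀ t, T ≤ t → wpMsg G k t = wpMsg G k T)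
    (dab : Bool → Bool → V → ℕ)
    (hdab : ∀ a b v, dab a b v = (Finset.univ.filter fun w =>
      G.Adj v w ∧ wpMsg G k T w v = a ∧ wpMsg G k T v w = b).card)
    (indeg : V → ℕ)
    (hindeg : ∀ v, indeg v =
      (Finset.univ.filter fun u => G.Adj u v ∧ wpMsg G k T u v = true).card) :
    ∀ v : V,
      (indeg v ≤ k-2 ↔ (dab true false v ≤ k-2 ∧ dab true true v = 0 ∧ dab false true v = 0)) ∧
      (indeg v = k-1 ↔ (dab true false v = k-1 ∧ dab true true v = 0 ∧ dab false false v = 0)) ∧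
      (k ≤ indeg v ↔ (k ≤ dab true true v ∧ dab true false v = 0 ∧ dab false false v = 0)) := by

  have hfix : wpMsg G k (T+1) = wpMsg G k T := hT (T+1) (Nat.le_succ T)
  intro v
  set S := Finset.univ.filter (fun u => G.Adj u v ∧ wpMsg G k T u v = true) with hSdef
  have hmS : indeg v = S.card := hindeg v
  have hmsg : ∀ w : V, G.Adj v w →
      wpMsg G k T v w = decide (k - 1 ≤ S.card - (if wpMsg G k T w v = true then 1 else 0)) := by
    intro w hvw
    have hS : (Finset.univ.filter fun u => G.Adj u v ∧ u ≠ w ∧ wpMsg G k T u v = true)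
        = S.erase w := by
      ext u
      simp only [hSdef, Finset.mem_filter, Finset.mem_erase, Finset.mem_univ, true_and]
      tauto
    have h0 : wpMsg G k T v w = wpMsg G k (T+1) v w := by rw [hfix]
    rw [h0]
    simp only [wpMsg]
    rw [hS]
    by_cases hw : wpMsg G k T w v = true
    · have hwmem : w ∈ S := by
        simp only [hSdef, Finset.mem_filter, Finset.mem_univ, true_and]
        exact ⟨hvw.symm, hw⟩
      rw [Finset.card_erase_of_mem hwmem, if_pos hw]
    · have hwmem : w ∉ S := by
        simp only [hSdef, Finset.mem_filter, Finset.mem_univ, true_and]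
        intro h; exact hw h.2
      rw [Finset.erase_eq_of_notMem hwmem, if_neg hw, Nat.sub_zero]
  have h1 : ∀ w : V, G.Adj v w → wpMsg G k T w v = true →
      (wpMsg G k T v w = true ↔ k ≤ S.card) := by
    intro w hvw hw
    have hwmem : w ∈ S := by
      simp only [hSdef, Finset.mem_filter, Finset.mem_univ, true_and]
      exact ⟨hvw.symm, hw⟩
    have hS1 : 1 ≤ S.card := Finset.card_pos.mpr ⟨w, hwmem⟩
    rw [hmsg w hvw, if_pos hw]
    simp only [decide_eq_true_eq]
    omega
  have h2 : ∀ w : V, G.Adj v w → wpMsg G k T w v = false →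
      (wpMsg G k T v w = true ↔ k - 1 ≤ S.card) := by
    intro w hvw hw
    rw [hmsg w hvw, if_neg (by simp [hw]), Nat.sub_zero]
    simp only [decide_eq_true_eq]
  -- values of dab
  have L3 : k ≤ S.card → dab true true v = S.card := by
    intro hkm
    rw [hdab]
    congr 1
    ext w
    simp only [hSdef, Finset.mem_filter, Finset.mem_univ, true_and]
    constructor
    · rintro ⟨hadj, hwv, -⟩; exact ⟨hadj.symm, hwv⟩
    · rintro ⟨hadj, hwv⟩
      exact ⟨hadj.symm, hwv, (h1 w hadj.symm hwv).mpr hkm⟩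
  have L4 : ¬ k ≤ S.card → dab true false v = S.card := by
    intro hkm
    rw [hdab]
    congr 1
    ext w
    simp only [hSdef, Finset.mem_filter, Finset.mem_univ, true_and]
    constructor
    · rintro ⟨hadj, hwv, -⟩; exact ⟨hadj.symm, hwv⟩
    · rintro ⟨hadj, hwv⟩
      refine ⟨hadj.symm, hwv, ?_⟩
      rw [← Bool.not_eq_true]
      intro h; exact hkm ((h1 w hadj.symm hwv).mp h)
  have L1 : ¬ k ≤ S.card → dab true true v = 0 := by
    intro hkm
    rw [hdab, Finset.card_eq_zero, Finset.filter_eq_empty_iff]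
    rintro w - ⟨hadj, hwv, hvw⟩
    exact hkm ((h1 w hadj hwv).mp hvw)
  have L2 : k ≤ S.card → dab true false v = 0 := by
    intro hkm
    rw [hdab, Finset.card_eq_zero, Finset.filter_eq_empty_iff]
    rintro w - ⟨hadj, hwv, hvw⟩
    rw [(h1 w hadj hwv).mpr hkm] at hvw
    simp at hvw
  have L5 : k - 1 ≤ S.card → dab false false v = 0 := by
    intro hkm
    rw [hdab, Finset.card_eq_zero, Finset.filter_eq_empty_iff]
    rintro w - ⟨hadj, hwv, hvw⟩
    rw [(h2 w hadj hwv).mpr hkm] at hvw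
    simp at hvw
  have L6 : ¬ k - 1 ≤ S.card → dab false true v = 0 := by
    intro hkm
    rw [hdab, Finset.card_eq_zero, Finset.filter_eq_empty_iff]
    rintro w - ⟨hadj, hwv, hvw⟩
    exact hkm ((h2 w hadj hwv).mp hvw)
  rw [hmS]
  by_cases hkm : k ≤ S.card
  · have e1 := L3 hkm
    have e2 := L2 hkm
    have e3 := L5 (by omega)
    refine ⟨?_, ?_, ?_⟩ <;> omega
  · by_cases hk1 : k - 1 ≤ S.card
    · have e1 := L1 hkm
      have e2 := L4 hkm
      have e3 := L5 hk1
      refine ⟨?_, ?_, ?_⟩ <;> omega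
    · have e1 := L1 hkm
      have e2 := L4 hkm
      have e3 := L6 hk1
      refine ⟨?_, ?_, ?_⟩ <;> omega
end

section
/- Let f_k(x) = ∑_{j=0}^{k-2} ((dp)^j/((1-p)·j!·exp(dp)))·P[Po(d(1-p)x) ≥ k-1-j] for x ∈ [0,1]. If p ∈ (0,1) is the largest fixed point of φ_{d,k} and dp ≥ k-2 and f_k'(0) < 1, then f_k is monotonically increasing and concave on [0,∞), f_k' < 1 on [0,∞), and consequently f_k(x) < x for all x ∈ (0,1]. -/
open Real Finset

lemma aux_sum_deriv (a : ℝ) (m : ℕ) (x : ℝ) :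
    HasDerivAt (fun x => ∑ i ∈ Finset.range (m+1), (a*x)^i / (Nat.factorial i))
      (a * ∑ i ∈ Finset.range m, (a*x)^i / (Nat.factorial i)) x := by
  have h : ∀ i : ℕ, HasDerivAt (fun x => (a*x)^i / (Nat.factorial i))
      ((i : ℝ) * (a*x)^(i-1) * a / (Nat.factorial i)) x := by
    intro i
    have h1 : HasDerivAt (fun x => a*x) a x := by
      simpa using (hasDerivAt_id x).const_mul a
    exact (h1.pow i).div_const _
  have hsum := HasDerivAt.fun_sum (fun i (_ : i ∈ Finset.range (m+1)) => h i)
  convert hsum using 1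
  case e'_4 => rfl
  case e'_5 => rfl
  rw [Finset.mul_sum, Finset.sum_range_succ']
  simp only [Nat.cast_zero, zero_mul, zero_div, add_zero, Nat.factorial_succ, Nat.cast_succ,
    Nat.add_sub_cancel]
  apply Finset.sum_congr rfl
  intro i _
  have : ((i:ℝ)+1) ≠ 0 := by positivity
  field_simp
  push_cast
  ring

lemma aux_g_deriv (a : ℝ) (m : ℕ) (x : ℝ) :
    HasDerivAt (fun x => Real.exp (-(a*x)) * ∑ i ∈ Finset.range (m+1), (a*x)^i / (Nat.factorial i))
      (-(a * Real.exp (-(a*x)) * ((a*x)^m / (Nat.factorial m)))) x := by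
  have h1 : HasDerivAt (fun x => Real.exp (-(a*x))) (Real.exp (-(a*x)) * (-a)) x := by
    have : HasDerivAt (fun x => -(a*x)) (-a) x := by
      simpa using ((hasDerivAt_id x).const_mul a).fun_neg
    exact this.exp
  have := h1.fun_mul (aux_sum_deriv a m x)
  convert this using 1
  case e'_4 => rfl
  case e'_5 => rfl
  rw [Finset.sum_range_succ]
  ring

lemma aux_antitone (n : ℕ) (hn : 1 ≤ n) :
    AntitoneOn (fun s : ℝ => s^n * Real.exp (-s)) (Set.Ici (n:ℝ)) := by
  have hds : ∀ s : ℝ, HasDerivAt (fun s : ℝ => s^n * Real.exp (-s))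
      ((n:ℝ) * s^(n-1) * Real.exp (-s) + s^n * (Real.exp (-s) * (-1))) s := by
    intro s
    exact (hasDerivAt_pow n s).mul ((hasDerivAt_id s).neg.exp)
  apply antitoneOn_of_deriv_nonpos (convex_Ici _)
  · exact (Continuous.mul (continuous_pow n) (Real.continuous_exp.comp continuous_neg)).continuousOn
  · intro s _
    exact (hds s).differentiableAt.differentiableWithinAt
  · intro s hs
    rw [interior_Ici] at hs
    rw [(hds s).deriv]
    have hs1 : (n:ℝ) < s := hs
    have hn1 : (1:ℝ) ≤ (n:ℝ) := by exact_mod_cast hn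
    have hspos : 0 < s := by linarith
    have hsn : s^n = s * s^(n-1) := by
      rw [← pow_succ']
      congr 1
      omega
    nlinarith [Real.exp_pos (-s), pow_nonneg hspos.le (n-1),
      mul_pos (pow_pos hspos (n-1)) (Real.exp_pos (-s))]

lemma aux_binom (n : ℕ) (d p q t : ℝ) (hp1 : (1:ℝ) - p ≠ 0) :
    ∑ j ∈ Finset.range (n+1), (q^j/((1-p) * (Nat.factorial j) * Real.exp q)) *
        (d*(1-p) * Real.exp (-t) * (t^(n-j)/(Nat.factorial (n-j)))) =
      d / (Nat.factorial n) * ((q+t)^n * Real.exp (-(q+t))) := by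
  have hexp : Real.exp (-(q+t)) = Real.exp (-t) / Real.exp q := by
    rw [eq_div_iff (Real.exp_ne_zero q), ← Real.exp_add]; ring_nf
  calc ∑ j ∈ Finset.range (n+1), (q^j/((1-p) * (Nat.factorial j) * Real.exp q)) *
        (d*(1-p) * Real.exp (-t) * (t^(n-j)/(Nat.factorial (n-j))))
      = ∑ j ∈ Finset.range (n+1), (d * Real.exp (-(q+t)) / (Nat.factorial n)) *
          (q^j * t^(n-j) * (n.choose j)) := by
        apply Finset.sum_congr rfl
        intro j hj
        have hj' : j ≤ n := Nat.lt_succ_iff.mp (Finset.mem_range.mp hj)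
        have hfact : (Nat.factorial n : ℝ) = (n.choose j) * (Nat.factorial j) * (Nat.factorial (n-j)) := by
          exact_mod_cast (Nat.choose_mul_factorial_mul_factorial hj').symm
        rw [hexp, hfact]
        have h1 : (Nat.factorial j : ℝ) ≠ 0 := by positivity
        have h2 : (Nat.factorial (n-j) : ℝ) ≠ 0 := by positivity
        have h3 : ((n.choose j : ℕ) : ℝ) ≠ 0 := by
          exact_mod_cast (Nat.choose_pos hj').ne'
        field_simp
    _ = (d * Real.exp (-(q+t)) / (Nat.factorial n)) *
          ∑ j ∈ Finset.range (n+1), q^j * t^(n-j) * (n.choose j) := by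
        rw [Finset.mul_sum]
    _ = d / (Nat.factorial n) * ((q+t)^n * Real.exp (-(q+t))) := by
        rw [← add_pow]; ring

/-- with f_k(x) = ∑_{j=0}^{k-2} ((dp)^j/((1-p)·j!·e^{dp}))·P[Po(d(1-p)x) ≥ k-1-j],
if p is a fixed point of φ_{d,k} with dp ≥ k-2 and f_k'(0) < 1, then f_k is monotonically
increasing and concave on [0,∞), has derivative < 1 there, and f_k(x) < x for x ∈ (0,1]. -/
theorem stmt15 (k : ℕ) (hk : 3 ≤ k) (d p : ℝ) (hd : 0 < d) (hp : p ∈ Set.Ioo (0:ℝ) 1)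
    (hfix : p = 1 - Real.exp (-(d*p)) * ∑ j ∈ Finset.range (k-1), (d*p)^j / (Nat.factorial j))
    (hdp : (k:ℝ) - 2 ≤ d*p)
    (f : ℝ → ℝ)
    (hf : f = fun x => ∑ j ∈ Finset.range (k-1),
      ((d*p)^j / ((1-p) * (Nat.factorial j) * Real.exp (d*p))) *
        (1 - Real.exp (-(d*(1-p)*x)) *
          ∑ i ∈ Finset.range (k-1-j), (d*(1-p)*x)^i / (Nat.factorial i)))
    (hderiv0 : deriv f 0 < 1) :
    MonotoneOn f (Set.Ici 0) ∧ ConcaveOn ℝ (Set.Ici 0) f ∧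
    (∀ x ∈ Set.Ici (0:ℝ), deriv f x < 1) ∧
    (∀ x ∈ Set.Ioc (0:ℝ) 1, f x < x) := by
  obtain ⟨hp0, hp1⟩ := hp
  have hp1' : (1:ℝ) - p ≠ 0 := by linarith
  set a : ℝ := d * (1 - p) with ha_def
  set q : ℝ := d * p with hq_def
  have ha : 0 < a := mul_pos hd (by linarith)
  have hq0 : 0 < q := mul_pos hd hp0
  set n : ℕ := k - 2 with hn_def
  have hn1 : 1 ≤ n := by omega
  have hk1 : k - 1 = n + 1 := by omega
  -- the derivative formula
  have hF : ∀ x : ℝ, HasDerivAt f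
      (d / (Nat.factorial n) * ((q + a*x)^n * Real.exp (-(q + a*x)))) x := by
    intro x
    rw [hf]
    have hterm : ∀ j ∈ Finset.range (k-1), HasDerivAt
        (fun x => ((q)^j / ((1-p) * (Nat.factorial j) * Real.exp q)) *
          (1 - Real.exp (-(a*x)) *
            ∑ i ∈ Finset.range (k-1-j), (a*x)^i / (Nat.factorial i)))
        ((q^j / ((1-p) * (Nat.factorial j) * Real.exp q)) *
          (a * Real.exp (-(a*x)) * ((a*x)^(n-j) / (Nat.factorial (n-j))))) x := by
      intro j hj
      have hj' : j < k - 1 := Finset.mem_range.mp hj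
      have hm : k - 1 - j = (n - j) + 1 := by omega
      rw [hm]
      have := ((aux_g_deriv a (n-j) x).const_sub 1).const_mul
        (q^j / ((1-p) * (Nat.factorial j) * Real.exp q))
      simpa using this
    have hsum := HasDerivAt.fun_sum hterm
    have heq : ∑ j ∈ Finset.range (k-1),
        (q^j / ((1-p) * (Nat.factorial j) * Real.exp q)) *
          (a * Real.exp (-(a*x)) * ((a*x)^(n-j) / (Nat.factorial (n-j)))) =
        d / (Nat.factorial n) * ((q + a*x)^n * Real.exp (-(q + a*x))) := by
      rw [hk1]
      exact aux_binom n d p q (a*x) hp1'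
    rw [heq] at hsum
    exact hsum
  have hderiv : ∀ x : ℝ, deriv f x =
      d / (Nat.factorial n) * ((q + a*x)^n * Real.exp (-(q + a*x))) :=
    fun x => (hF x).deriv
  have hcont : Continuous f :=
    (Differentiable.continuous (fun x => (hF x).differentiableAt))
  have hdiff : ∀ x : ℝ, DifferentiableAt ℝ f x := fun x => (hF x).differentiableAt
  -- antitone derivative on Ici 0
  have hanti : AntitoneOn (deriv f) (Set.Ici 0) := by
    intro x hx y hy hxy
    rw [hderiv, hderiv]
    have hxI : q + a*x ∈ Set.Ici ((n:ℝ)) := by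
      have : (n:ℝ) ≤ q := by
        have : ((n:ℕ):ℝ) = (k:ℝ) - 2 := by
          rw [hn_def]; push_cast [show (2:ℕ) ≤ k by omega]; ring
        rw [this]; exact hdp
      have hax : 0 ≤ a*x := mul_nonneg ha.le hx
      simp only [Set.mem_Ici]; linarith
    have hyI : q + a*y ∈ Set.Ici ((n:ℝ)) := by
      have hnq : (n:ℝ) ≤ q := by
        have : ((n:ℕ):ℝ) = (k:ℝ) - 2 := by
          rw [hn_def]; push_cast [show (2:ℕ) ≤ k by omega]; ring
        rw [this]; exact hdp
      have hay : 0 ≤ a*y := mul_nonneg ha.le (le_trans hx hxy)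
      simp only [Set.mem_Ici]; linarith
    have hle : q + a*x ≤ q + a*y := by
      have := mul_le_mul_of_nonneg_left hxy ha.le
      linarith
    have := aux_antitone n hn1 hxI hyI hle
    have hdn : 0 ≤ d / (Nat.factorial n) := by positivity
    exact mul_le_mul_of_nonneg_left this hdn
  have hd0 : deriv f 0 = d / (Nat.factorial n) * ((q)^n * Real.exp (-q)) := by
    rw [hderiv]; norm_num
  -- deriv < 1 on Ici 0
  have hlt1 : ∀ x ∈ Set.Ici (0:ℝ), deriv f x < 1 := by
    intro x hx
    have := hanti (Set.self_mem_Ici) hx hx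
    linarith
  -- deriv nonneg
  have hnonneg : ∀ x ∈ Set.Ici (0:ℝ), 0 ≤ deriv f x := by
    intro x hx
    rw [hderiv]
    have : 0 ≤ q + a*x := by
      have := mul_nonneg ha.le (hx : (0:ℝ) ≤ x)
      linarith
    positivity
  have hmono : MonotoneOn f (Set.Ici 0) := by
    apply monotoneOn_of_deriv_nonneg (convex_Ici _) hcont.continuousOn
    · intro x _; exact (hdiff x).differentiableWithinAt
    · intro x hx
      exact hnonneg x (Set.mem_Ici.mpr (le_of_lt (by rwa [interior_Ici] at hx)))
  have hconc : ConcaveOn ℝ (Set.Ici 0) f := by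
    apply AntitoneOn.concaveOn_of_deriv (convex_Ici _) hcont.continuousOn
    · intro x _; exact (hdiff x).differentiableWithinAt
    · rw [interior_Ici]
      exact hanti.mono (Set.Ioi_subset_Ici le_rfl)
  refine ⟨hmono, hconc, hlt1, ?_⟩
  -- f x < x on (0,1]
  have hf0 : f 0 = 0 := by
    rw [hf]
    apply Finset.sum_eq_zero
    intro j hj
    have hj' : j < k - 1 := Finset.mem_range.mp hj
    have hm : k - 1 - j = (n - j) + 1 := by omega
    rw [hm]
    rw [Finset.sum_range_succ']
    norm_num
  intro x hx
  obtain ⟨hx0, _⟩ := hx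
  have hg : StrictMonoOn (fun x => x - f x) (Set.Ici 0) := by
    apply strictMonoOn_of_deriv_pos (convex_Ici _)
    · exact (continuous_id.sub hcont).continuousOn
    · intro y hy
      rw [interior_Ici] at hy
      have : deriv (fun x => x - f x) y = 1 - deriv f y := by
        rw [deriv_fun_sub differentiableAt_fun_id (hdiff y)]
        simp
      rw [this]
      have := hlt1 y (Set.mem_Ici.mpr (le_of_lt hy))
      linarith
  have := hg Set.self_mem_Ici (Set.mem_Ici.mpr hx0.le) hx0
  simp only [hf0, sub_zero] at this
  linarith
end
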